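/- Let (s_1, s_2) be a Cuntz family of order 2 on a complex Hilbert space H with a cyclic unit vector Ω. If (s_1 + s_2)Ω = √2·Ω, then for every n ≥ 1 one has 2^{−n} Σ_{J,K ∈ {1,2}^n} s_J s_K^* Ω = Ω, and Ω is UHF-cyclic. If instead (s_1 − s_2)Ω = √2·Ω, then for every n ≥ 1 one has 2^{−n} Σ_{J,K ∈ {1,2}^n} (−1)^{‖J−K‖} s_J s_K^* Ω = Ω, where ‖J−K‖ := Σ_{i=1}^n (j_i − k_i) for J = (j_i), K = (k_i), and Ω is UHF-cyclic. That is, the restriction of GP(±) to the gauge-invariant subalgebra is GP[±]. -/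

import Mathlib

noncomputable section

def IsCuntzFamily {H : Type*} [NormedAddCommGroup H] [InnerProductSpace ℂ H]
    [CompleteSpace H] {N : ℕ} (s : Fin N → H →L[ℂ] H) : Prop :=
  (∀ i j, star (s i) * s j = if i = j then (1 : H →L[ℂ] H) else 0) ∧
  ∑ i, s i * star (s i) = 1

def wordOp {H : Type*} [NormedAddCommGroup H] [InnerProductSpace ℂ H]
    [CompleteSpace H] {N : ℕ} (s : Fin N → H →L[ℂ] H) : List (Fin N) → H →L[ℂ] H
  | [] => 1
  | j :: J => s j * wordOp s J

def IsCyclicVec {H : Type*} [NormedAddCommGroup H] [InnerProductSpace ℂ H]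
    [CompleteSpace H] {N : ℕ} (s : Fin N → H →L[ℂ] H) (Ω : H) : Prop :=
  ∀ W : Submodule ℂ H, IsClosed (W : Set H) → Ω ∈ W →
    (∀ i, ∀ x ∈ W, s i x ∈ W ∧ star (s i) x ∈ W) → W = ⊤

def UHFSpan {H : Type*} [NormedAddCommGroup H] [InnerProductSpace ℂ H]
    [CompleteSpace H] {N : ℕ} (s : Fin N → H →L[ℂ] H) (v : H) : Submodule ℂ H :=
  (Submodule.span ℂ {x : H | ∃ K L : List (Fin N), K.length = L.length ∧
      x = (wordOp s K * star (wordOp s L)) v}).topologicalClosure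

def IsUHFCyclic {H : Type*} [NormedAddCommGroup H] [InnerProductSpace ℂ H]
    [CompleteSpace H] {N : ℕ} (s : Fin N → H →L[ℂ] H) (Ω : H) : Prop :=
  UHFSpan s Ω = ⊤

/-- `F_{n,+} = 2^{-n} Σ_{J,K ∈ {1,2}^n} s_J s_K^*`. -/
def Fplus {H : Type*} [NormedAddCommGroup H] [InnerProductSpace ℂ H]
    [CompleteSpace H] (s : Fin 2 → H →L[ℂ] H) (n : ℕ) : H →L[ℂ] H :=
  ((2 : ℂ) ^ n)⁻¹ • ∑ J : Fin n → Fin 2, ∑ K : Fin n → Fin 2,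
    wordOp s (List.ofFn J) * star (wordOp s (List.ofFn K))

/-- `F_{n,-} = 2^{-n} Σ_{J,K ∈ {1,2}^n} (-1)^{‖J-K‖} s_J s_K^*`. -/
def Fminus {H : Type*} [NormedAddCommGroup H] [InnerProductSpace ℂ H]
    [CompleteSpace H] (s : Fin 2 → H →L[ℂ] H) (n : ℕ) : H →L[ℂ] H :=
  ((2 : ℂ) ^ n)⁻¹ • ∑ J : Fin n → Fin 2, ∑ K : Fin n → Fin 2,
    ((-1 : ℂ) ^ (∑ i, (((J i : ℕ) : ℤ) - ((K i : ℕ) : ℤ)))) •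
      (wordOp s (List.ofFn J) * star (wordOp s (List.ofFn K)))


section Aux

lemma sum_word' {A : Type*} [Ring A] (a : Fin 2 → A) (n : ℕ) :
    ∑ J : Fin n → Fin 2, ((List.ofFn J).map a).prod = (a 0 + a 1) ^ n := by
  induction n with
  | zero => simp
  | succ n ih =>
    rw [← (Fin.consEquiv (fun _ : Fin (n+1) => Fin 2)).sum_comp, Fintype.sum_prod_type]
    simp only [Fin.consEquiv_apply, List.ofFn_succ, Fin.cons_zero, Fin.cons_succ,
      List.map_cons, List.prod_cons, ← Finset.mul_sum, ih]
    rw [← Finset.sum_mul, Fin.sum_univ_two, pow_succ']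

variable {H : Type*} [NormedAddCommGroup H] [InnerProductSpace ℂ H] [CompleteSpace H]

lemma wordOp_eq_prod {N : ℕ} (s : Fin N → H →L[ℂ] H) (L : List (Fin N)) :
    wordOp s L = (L.map s).prod := by
  induction L with
  | nil => rfl
  | cons j J ih => simp [wordOp, ih]

lemma smul_word_prod {N : ℕ} (s : Fin N → H →L[ℂ] H) (c : Fin N → ℂ) (L : List (Fin N)) :
    (L.map (fun j => c j • s j)).prod = (L.map c).prod • (L.map s).prod := by
  induction L with
  | nil => simp
  | cons j J ih =>
    rw [List.map_cons, List.prod_cons, ih, List.map_cons, List.prod_cons,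
      List.map_cons, List.prod_cons, smul_mul_smul_comm, mul_smul]

lemma sign_ofFn_prod (n : ℕ) (J : Fin n → Fin 2) :
    (List.ofFn (fun i => ((-1:ℂ) ^ (J i : ℕ)))).prod = (-1:ℂ) ^ (∑ i, (J i : ℕ)) := by
  rw [List.prod_ofFn, Finset.prod_pow_eq_pow_sum]

lemma sign_split (n : ℕ) (J K : Fin n → Fin 2) :
    ((-1 : ℂ) ^ (∑ i, (((J i : ℕ) : ℤ) - ((K i : ℕ) : ℤ))))
      = (-1:ℂ) ^ (∑ i, (J i : ℕ)) * (-1:ℂ) ^ (∑ i, (K i : ℕ)) := by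
  rw [Finset.sum_sub_distrib, ← Nat.cast_sum, ← Nat.cast_sum,
    zpow_sub₀ (by norm_num : (-1:ℂ) ≠ 0), zpow_natCast, zpow_natCast, div_eq_mul_inv,
    ← inv_pow]
  norm_num

lemma Fplus_eq (s : Fin 2 → H →L[ℂ] H) (n : ℕ) :
    Fplus s n = ((2:ℂ)^n)⁻¹ • ((s 0 + s 1)^n * (star (s 0 + s 1))^n) := by
  unfold Fplus
  congr 1
  rw [← Finset.sum_mul_sum, ← star_sum]
  simp_rw [wordOp_eq_prod]
  rw [sum_word', ← star_pow]

lemma signed_word (s : Fin 2 → H →L[ℂ] H) {m : ℕ} (f : Fin m → Fin 2) :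
    (-1:ℂ)^(∑ i, (f i : ℕ)) • wordOp s (List.ofFn f)
      = ((List.ofFn f).map (fun j : Fin 2 => ((-1:ℂ)^(j.val)) • s j)).prod := by
  rw [smul_word_prod, wordOp_eq_prod]
  congr 1
  rw [List.map_ofFn]
  exact (sign_ofFn_prod _ f).symm

lemma Fminus_eq (s : Fin 2 → H →L[ℂ] H) (n : ℕ) :
    Fminus s n = ((2:ℂ)^n)⁻¹ • ((s 0 - s 1)^n * (star (s 0 - s 1))^n) := by
  unfold Fminus
  congr 1
  simp_rw [sign_split, ← smul_mul_smul_comm]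
  rw [← Finset.sum_mul_sum]
  have h1 : ∀ K : Fin n → Fin 2,
      (-1:ℂ)^(∑ i, (K i : ℕ)) • star (wordOp s (List.ofFn K))
        = star ((-1:ℂ)^(∑ i, (K i : ℕ)) • wordOp s (List.ofFn K)) := by
    intro K; rw [star_smul]; norm_num
  simp_rw [h1, signed_word]
  rw [← star_sum, sum_word']
  have h2 : ((-1:ℂ)^((0:Fin 2).val)) • s 0 + ((-1:ℂ)^((1:Fin 2).val)) • s 1 = s 0 - s 1 := by
    norm_num [sub_eq_add_neg]
  rw [h2, star_pow]

lemma pow_apply_eig (A : H →L[ℂ] H) (Ω : H) (r : ℂ) (h : A Ω = r • Ω) (n : ℕ) :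
    (A ^ n) Ω = r ^ n • Ω := by
  induction n with
  | zero => simp
  | succ n ih =>
    rw [pow_succ', ContinuousLinearMap.mul_apply, ih, map_smul, h, smul_smul, pow_succ',
      mul_comm]

lemma F_app (T : H →L[ℂ] H) (Ω : H) (hTT : star T * T = (2:ℂ) • 1)
    (hT : T Ω = (Real.sqrt 2 : ℂ) • Ω) (n : ℕ) :
    (((2:ℂ)^n)⁻¹ • (T^n * (star T)^n)) Ω = Ω := by
  set r : ℂ := (Real.sqrt 2 : ℂ) with hr
  have hrr : r * r = 2 := by
    rw [hr, ← Complex.ofReal_mul, Real.mul_self_sqrt (by norm_num)]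
    norm_num
  have hr0 : r ≠ 0 := by
    intro h0
    rw [h0, mul_zero] at hrr
    norm_num at hrr
  have hT' : star T Ω = r • Ω := by
    have e1 : star T (T Ω) = ((2:ℂ) • (1 : H →L[ℂ] H)) Ω := by
      rw [← ContinuousLinearMap.mul_apply, hTT]
    rw [hT, map_smul] at e1
    simp only [ContinuousLinearMap.smul_apply, ContinuousLinearMap.one_apply] at e1
    apply smul_right_injective H hr0
    show r • (star T) Ω = r • (r • Ω)
    rw [e1, smul_smul, hrr]
  have hT2 : ((star T)^n) Ω = r^n • Ω := pow_apply_eig _ _ _ hT' n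
  have hT3 : (T^n) Ω = r^n • Ω := pow_apply_eig _ _ _ hT n
  rw [ContinuousLinearMap.smul_apply, ContinuousLinearMap.mul_apply, hT2, map_smul, hT3,
    smul_smul, smul_smul]
  have hc : ((2:ℂ)^n)⁻¹ * r^n * r^n = 1 := by
    rw [mul_assoc, ← mul_pow, hrr]
    exact inv_mul_cancel₀ (by norm_num)
  rw [hc, one_smul]

lemma uhf_of (s : Fin 2 → H →L[ℂ] H) (hs : IsCuntzFamily s) (Ω : H)
    (hcyc : IsCyclicVec s Ω) (c : Fin 2 → ℂ)
    (h1 : Ω = c 0 • s 0 Ω + c 1 • s 1 Ω)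
    (h2 : Ω = c 0 • star (s 0) Ω + c 1 • star (s 1) Ω) :
    IsUHFCyclic s Ω := by
  have hptw : ∀ (i j : Fin 2) (x : H), star (s i) (s j x) = if i = j then x else 0 := by
    intro i j x
    have h := congrArg (fun A : H →L[ℂ] H => A x) (hs.1 i j)
    simp only [ContinuousLinearMap.mul_apply] at h
    rw [h]
    split <;> simp
  set S : Set H := {x : H | ∃ K L : List (Fin 2), K.length = L.length ∧
      x = (wordOp s K * star (wordOp s L)) Ω} with hSdef
  set V := Submodule.span ℂ S with hVdef
  set W := V.topologicalClosure with hWdef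
  have hWc : IsClosed (W : Set H) := Submodule.isClosed_topologicalClosure V
  have hΩS : Ω ∈ S := ⟨[], [], rfl, by simp [wordOp]⟩
  have hSV : S ⊆ (V : Set H) := Submodule.subset_span
  have hVW : V ≤ W := Submodule.le_topologicalClosure V
  have hΩW : Ω ∈ W := hVW (hSV hΩS)
  have gen1 : ∀ i : Fin 2, ∀ x ∈ S, s i x ∈ V := by
    rintro i x ⟨K, L, hKL, rfl⟩
    have key : s i ((wordOp s K * star (wordOp s L)) Ω)
        = c 0 • ((wordOp s (i::K) * star (wordOp s ((0:Fin 2)::L))) Ω)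
          + c 1 • ((wordOp s (i::K) * star (wordOp s ((1:Fin 2)::L))) Ω) := by
      conv_lhs => rw [h2]
      simp only [wordOp, ContinuousLinearMap.mul_apply, star_mul, map_add, map_smul]
    rw [key]
    exact V.add_mem
      (V.smul_mem _ (hSV ⟨i::K, (0:Fin 2)::L, by simp [hKL], rfl⟩))
      (V.smul_mem _ (hSV ⟨i::K, (1:Fin 2)::L, by simp [hKL], rfl⟩))
  have gen2 : ∀ i : Fin 2, ∀ x ∈ S, star (s i) x ∈ V := by
    rintro i x ⟨K, L, hKL, rfl⟩
    match K, L, hKL with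
    | [], L, hKL =>
      have hL : L = [] := List.length_eq_zero_iff.mp hKL.symm
      subst hL
      have key : star (s i) ((wordOp s ([] : List (Fin 2)) *
          star (wordOp s ([] : List (Fin 2)))) Ω) = c i • Ω := by
        show star (s i) (((1 : H →L[ℂ] H) * star (1 : H →L[ℂ] H)) Ω) = c i • Ω
        rw [star_one, mul_one, ContinuousLinearMap.one_apply]
        conv_lhs => rw [h1]
        rw [map_add, map_smul, map_smul, hptw, hptw]
        fin_cases i <;> simp
      rw [key]
      exact V.smul_mem _ (hSV hΩS)
    | k::K', l::L', hKL =>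
      have hKL' : K'.length = L'.length := Nat.succ_injective hKL
      have key : star (s i) ((wordOp s (k::K') * star (wordOp s (l::L'))) Ω)
          = if i = k then c l • ((wordOp s K' * star (wordOp s L')) Ω) else 0 := by
        conv_lhs => rw [h1]
        simp only [wordOp, ContinuousLinearMap.mul_apply, star_mul, map_add, map_smul,
          hptw]
        by_cases hik : i = k
        · subst hik
          simp only [if_pos rfl]
          fin_cases l <;> simp [hptw]
        · simp [hik]
      rw [key]
      split
      · exact V.smul_mem _ (hSV ⟨K', L', hKL', rfl⟩)
      · exact V.zero_mem
  have mono : ∀ (A : H →L[ℂ] H), (∀ x ∈ S, A x ∈ V) → ∀ x ∈ W, A x ∈ W := by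
    intro A hA x hx
    have hle : V ≤ W.comap (A : H →ₗ[ℂ] H) := Submodule.span_le.mpr (fun y hy => (show A y ∈ W from hVW (hA y hy)))
    have hcl : IsClosed ((W.comap (A : H →ₗ[ℂ] H) : Submodule ℂ H) : Set H) := by
      have : ((W.comap (A : H →ₗ[ℂ] H) : Submodule ℂ H) : Set H) = A ⁻¹' (W : Set H) := rfl
      rw [this]
      exact hWc.preimage A.continuous
    exact (Submodule.topologicalClosure_minimal V hle hcl) hx
  have inv : ∀ i : Fin 2, ∀ x ∈ W, s i x ∈ W ∧ star (s i) x ∈ W := by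
    intro i x hx
    exact ⟨mono (s i) (gen1 i) x hx, mono (star (s i)) (gen2 i) x hx⟩
  have := hcyc W hWc hΩW inv
  unfold IsUHFCyclic UHFSpan
  exact this

end Aux

theorem GP_restriction_is_GPpm
    {H : Type*} [NormedAddCommGroup H] [InnerProductSpace ℂ H] [CompleteSpace H]
    (s : Fin 2 → H →L[ℂ] H) (hs : IsCuntzFamily s)
    (Ω : H) (hΩ : ‖Ω‖ = 1) (hcyc : IsCyclicVec s Ω) :
    ((s 0 + s 1) Ω = (Real.sqrt 2 : ℂ) • Ω →
      (∀ n : ℕ, 1 ≤ n → Fplus s n Ω = Ω) ∧ IsUHFCyclic s Ω)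
    ∧ ((s 0 - s 1) Ω = (Real.sqrt 2 : ℂ) • Ω →
      (∀ n : ℕ, 1 ≤ n → Fminus s n Ω = Ω) ∧ IsUHFCyclic s Ω) := by
  have h00 : star (s 0) * s 0 = 1 := by simpa using hs.1 0 0
  have h01 : star (s 0) * s 1 = 0 := by simpa using hs.1 0 1
  have h10 : star (s 1) * s 0 = 0 := by simpa using hs.1 1 0
  have h11 : star (s 1) * s 1 = 1 := by simpa using hs.1 1 1
  have hr0 : (Real.sqrt 2 : ℂ) ≠ 0 := by
    simp only [ne_eq, Complex.ofReal_eq_zero]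
    positivity
  constructor
  · intro hT
    set T := s 0 + s 1 with hTdef
    have hTT : star T * T = (2:ℂ) • 1 := by
      rw [hTdef, star_add, add_mul, mul_add, mul_add, h00, h01, h10, h11]
      rw [add_zero, zero_add, two_smul]
    have hstar : star T Ω = (Real.sqrt 2 : ℂ) • Ω := by
      have e1 : star T (T Ω) = ((2:ℂ) • (1 : H →L[ℂ] H)) Ω := by
        rw [← ContinuousLinearMap.mul_apply, hTT]
      rw [hT, map_smul] at e1
      simp only [ContinuousLinearMap.smul_apply, ContinuousLinearMap.one_apply] at e1
      apply smul_right_injective H hr0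
      show (Real.sqrt 2 : ℂ) • (star T) Ω = (Real.sqrt 2 : ℂ) • ((Real.sqrt 2 : ℂ) • Ω)
      rw [e1, smul_smul, ← Complex.ofReal_mul, Real.mul_self_sqrt (by norm_num)]
      norm_num
    refine ⟨fun n _ => ?_, ?_⟩
    · rw [Fplus_eq]
      exact F_app T Ω hTT hT n
    · apply uhf_of s hs Ω hcyc (fun _ => ((Real.sqrt 2 : ℂ))⁻¹)
      · have := hT
        rw [hTdef, ContinuousLinearMap.add_apply] at this
        rw [← smul_add, this, smul_smul, inv_mul_cancel₀ hr0, one_smul]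
      · have := hstar
        rw [hTdef, star_add, ContinuousLinearMap.add_apply] at this
        rw [← smul_add, this, smul_smul, inv_mul_cancel₀ hr0, one_smul]
  · intro hT
    set T := s 0 - s 1 with hTdef
    have hTT : star T * T = (2:ℂ) • 1 := by
      rw [hTdef, star_sub, sub_mul, mul_sub, mul_sub, h00, h01, h10, h11]
      rw [sub_zero, zero_sub, sub_neg_eq_add, two_smul]
    have hstar : star T Ω = (Real.sqrt 2 : ℂ) • Ω := by
      have e1 : star T (T Ω) = ((2:ℂ) • (1 : H →L[ℂ] H)) Ω := by
        rw [← ContinuousLinearMap.mul_apply, hTT]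
      rw [hT, map_smul] at e1
      simp only [ContinuousLinearMap.smul_apply, ContinuousLinearMap.one_apply] at e1
      apply smul_right_injective H hr0
      show (Real.sqrt 2 : ℂ) • (star T) Ω = (Real.sqrt 2 : ℂ) • ((Real.sqrt 2 : ℂ) • Ω)
      rw [e1, smul_smul, ← Complex.ofReal_mul, Real.mul_self_sqrt (by norm_num)]
      norm_num
    refine ⟨fun n _ => ?_, ?_⟩
    · rw [Fminus_eq]
      exact F_app T Ω hTT hT n
    · apply uhf_of s hs Ω hcyc
        (fun j => if j = 0 then ((Real.sqrt 2 : ℂ))⁻¹ else -((Real.sqrt 2 : ℂ))⁻¹)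
      · have := hT
        rw [hTdef, ContinuousLinearMap.sub_apply] at this
        rw [if_pos rfl, if_neg (by decide : ¬ ((1:Fin 2) = 0)), neg_smul, ← smul_neg,
          ← smul_add, ← sub_eq_add_neg, this, smul_smul, inv_mul_cancel₀ hr0, one_smul]
      · have := hstar
        rw [hTdef, star_sub, ContinuousLinearMap.sub_apply] at this
        rw [if_pos rfl, if_neg (by decide : ¬ ((1:Fin 2) = 0)), neg_smul, ← smul_neg,
          ← smul_add, ← sub_eq_add_neg, this, smul_smul, inv_mul_cancel₀ hr0, one_smul]
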